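/- For every positive integer l, the simplex S_n(l) = conv{e_1, ..., e_n, -l·(e_1+...+e_n)} contains exactly l lattice points of ℤⁿ in its interior, namely the points -j·(e_1+...+e_n) for j = 0, 1, ..., l-1. -/

import Mathlib

lemma lin_sum {n : ℕ} (a : Fin n → ℝ) :
    IsLinearMap ℝ (fun y : Fin n → ℝ => ∑ i, a i * y i) := by
  constructor
  · intro x y; simp [mul_add, Finset.sum_add_distrib]
  · intro c x; simp [Finset.mul_sum, mul_left_comm]

lemma strict_of_interior {n : ℕ} (a : Fin n → ℝ) (c : ℝ) (S : Set (Fin n → ℝ))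
    (hS : ∀ y ∈ S, ∑ i, a i * y i ≤ c) (v : Fin n → ℝ)
    (hv : 0 < ∑ i, a i * v i) {x : Fin n → ℝ} (hx : x ∈ interior S) :
    ∑ i, a i * x i < c := by
  obtain ⟨U, hUS, hUopen, hxU⟩ := mem_interior.mp hx
  have hφ : Continuous fun t : ℝ => x + t • v := by continuity
  have hnh : (fun t : ℝ => x + t • v) ⁻¹' U ∈ nhds (0 : ℝ) := by
    apply hφ.continuousAt.preimage_mem_nhds
    simpa using hUopen.mem_nhds hxU
  obtain ⟨ε, hε, hball⟩ := Metric.mem_nhds_iff.mp hnh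
  have hmem : x + (ε / 2) • v ∈ S := by
    apply hUS
    apply hball
    simp [Real.ball_eq_Ioo]
    constructor <;> linarith
  have h1 := hS _ hmem
  have h2 : ∑ i, a i * (x + (ε / 2) • v) i
      = (∑ i, a i * x i) + (ε / 2) * ∑ i, a i * v i := by
    simp only [Pi.add_apply, Pi.smul_apply, smul_eq_mul, mul_add, Finset.sum_add_distrib,
      Finset.mul_sum]
    congr 1
    exact Finset.sum_congr rfl fun i _ => by ring
  rw [h2] at h1
  nlinarith

lemma mem_hull_of_weak {n l : ℕ} (x : Fin n → ℝ)
    (h1 : ∑ i, x i ≤ 1)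
    (h2 : ∀ i, 0 ≤ (1 + (n : ℝ) * l) * x i + l * (1 - ∑ j, x j)) :
    x ∈ convexHull ℝ
      (Set.range (fun i : Fin n => (Pi.single i 1 : Fin n → ℝ)) ∪
        {fun _ : Fin n => -(l : ℝ)}) := by
  set D : ℝ := 1 + (n : ℝ) * l with hD
  have hDpos : 0 < D := by positivity
  set s : ℝ := (1 - ∑ j, x j) / D with hs
  have hs0 : 0 ≤ s := div_nonneg (by linarith) hDpos.le
  set t : Fin n → ℝ := fun i => x i + s * l with ht
  have ht0 : ∀ i, 0 ≤ t i := by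
    intro i
    have := h2 i
    have : 0 ≤ (D * x i + l * (1 - ∑ j, x j)) / D := div_nonneg this hDpos.le
    calc (0:ℝ) ≤ (D * x i + l * (1 - ∑ j, x j)) / D := this
      _ = x i + s * l := by rw [hs, add_div, mul_div_cancel_left₀ _ hDpos.ne']; ring
  -- weights over Option (Fin n)
  set w : Option (Fin n) → ℝ := fun o => o.elim s t with hw
  set p : Option (Fin n) → (Fin n → ℝ) :=
    fun o => o.elim (fun _ => -(l : ℝ)) (fun i => Pi.single i 1) with hp
  have hwsum : ∑ o : Option (Fin n), w o = 1 := by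
    rw [Fintype.sum_option]
    have : ∑ i, t i = (∑ i, x i) + n * (s * l) := by
      simp [ht, Finset.sum_add_distrib, Finset.card_univ, mul_comm]
    simp only [hw, Option.elim]
    rw [this]
    have hsD : s * D = 1 - ∑ j, x j := div_mul_cancel₀ _ hDpos.ne'
    linear_combination hsD - s * hD
  have hx : x = ∑ o : Option (Fin n), w o • p o := by
    funext k
    rw [Fintype.sum_option]
    simp only [hw, hp, Option.elim, Finset.sum_apply, Pi.add_apply, Pi.smul_apply,
      smul_eq_mul, Pi.single_apply]
    have : ∑ i, t i * (if k = i then (1:ℝ) else 0) = t k := by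
      simp [mul_ite]
    rw [this]
    simp [ht]
  rw [hx]
  apply Convex.sum_mem (convex_convexHull ℝ _)
  · intro o _
    cases o with
    | none => exact hs0
    | some i => exact ht0 i
  · exact hwsum
  · intro o _
    apply subset_convexHull
    cases o with
    | none => exact Or.inr rfl
    | some i => exact Or.inl ⟨i, rfl⟩

lemma int_classify {n l : ℕ} (hn : 1 ≤ n) (z : Fin n → ℤ)
    (h0 : ∑ i, z i < 1)
    (h : ∀ i, (l : ℤ) * ∑ j, z j - (1 + n * l) * z i < l) :
    ∃ j : ℕ, j < l ∧ ∀ i, z i = -(j : ℤ) := by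
  have hne : (Finset.univ : Finset (Fin n)).Nonempty := by
    rw [Finset.univ_nonempty_iff]
    exact Fin.pos_iff_nonempty.mp hn
  obtain ⟨i0, -, hi0⟩ := Finset.exists_min_image Finset.univ z hne
  set m := z i0 with hm
  set S := ∑ i, z i with hS
  have hmin : ∀ i, m ≤ z i := fun i => hi0 i (Finset.mem_univ i)
  have hSnm : (n : ℤ) * m ≤ S := by
    calc (n : ℤ) * m = ∑ _i : Fin n, m := by simp [Finset.card_univ, mul_comm]
      _ ≤ S := Finset.sum_le_sum fun i _ => hmin i
  have hS0 : S ≤ 0 := by omega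
  have hm0 : m ≤ 0 := by nlinarith
  have hkey := h i0
  have hlS : (l : ℤ) * ((n:ℤ) * m) ≤ l * S :=
    mul_le_mul_of_nonneg_left hSnm (by positivity)
  have hmlow : -(m : ℤ) ≤ (l : ℤ) - 1 := by nlinarith
  have hall : ∀ i, z i = m := by
    intro k
    by_contra hk
    have hk1 : m + 1 ≤ z k := by
      have := hmin k; omega
    have hS1 : (n : ℤ) * m + 1 ≤ S := by
      have : ∑ i, (m + if i = k then 1 else 0) ≤ S := by
        apply Finset.sum_le_sum
        intro i _
        by_cases hik : i = k
        · simp [hik, hk1]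
        · simp [hik, hmin i]
      calc (n:ℤ) * m + 1 = ∑ i : Fin n, (m + if i = k then (1:ℤ) else 0) := by
            simp [Finset.sum_add_distrib, Finset.card_univ, mul_comm]
        _ ≤ S := this
    have hlS1 : (l : ℤ) * ((n:ℤ) * m + 1) ≤ l * S :=
      mul_le_mul_of_nonneg_left hS1 (by positivity)
    nlinarith
  refine ⟨(-m).toNat, ?_, ?_⟩
  · omega
  · intro i
    rw [hall i]
    omega

/-- `S_n(l)` contains exactly `l` interior lattice points, namely
`-j·(e_1+⋯+e_n)` for `j = 0,…,l-1`. -/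
theorem interior_lattice_points_S_n_l (n l : ℕ) (hn : 1 ≤ n) (hl : 1 ≤ l) :
    {x : Fin n → ℝ |
        x ∈ interior (convexHull ℝ
          (Set.range (fun i : Fin n => (Pi.single i 1 : Fin n → ℝ)) ∪
            {fun _ : Fin n => -(l : ℝ)})) ∧ ∀ i, ∃ z : ℤ, x i = z} =
      {x : Fin n → ℝ | ∃ j : ℕ, j < l ∧ x = fun _ => -(j : ℝ)} ∧
    Set.ncard {x : Fin n → ℝ |
        x ∈ interior (convexHull ℝ
          (Set.range (fun i : Fin n => (Pi.single i 1 : Fin n → ℝ)) ∪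
            {fun _ : Fin n => -(l : ℝ)})) ∧ ∀ i, ∃ z : ℤ, x i = z} = l := by
  set A : Set (Fin n → ℝ) :=
    Set.range (fun i : Fin n => (Pi.single i 1 : Fin n → ℝ)) ∪
      {fun _ : Fin n => -(l : ℝ)} with hA
  set K := convexHull ℝ A with hK
  set D : ℝ := 1 + (n : ℝ) * l with hD
  have hDpos : (0:ℝ) < D := by positivity
  have hln : (1:ℝ) ≤ (n:ℝ) := by exact_mod_cast hn
  -- generator evaluation helper
  have hsingle : ∀ (a : Fin n → ℝ) (k : Fin n),
      ∑ j, a j * (Pi.single k 1 : Fin n → ℝ) j = a k := by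
    intro a k
    simp [Pi.single_apply, mul_ite, Finset.sum_ite_eq]
  -- the coefficient vectors
  set a0 : Fin n → ℝ := fun _ => 1 with ha0
  set av : Fin n → Fin n → ℝ := fun i => fun j => (l:ℝ) - D * (if j = i then 1 else 0) with hav
  -- K is inside weak halfspaces
  have hs0 : ∀ y ∈ K, ∑ i, a0 i * y i ≤ 1 := by
    intro y hy
    refine convexHull_min ?_ (convex_halfSpace_le (lin_sum a0) 1) hy
    rintro g (⟨k, rfl⟩ | rfl)
    · show ∑ i, a0 i * (Pi.single k 1 : Fin n → ℝ) i ≤ 1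
      rw [hsingle]
    · show ∑ i, a0 i * (-(l:ℝ)) ≤ 1
      have h1 : ∑ i : Fin n, a0 i * (-(l:ℝ)) = (n:ℝ) * (-(l:ℝ)) := by
        simp [ha0, Finset.sum_const, Finset.card_univ]
      rw [h1]
      have : (0:ℝ) ≤ (n:ℝ) * l := by positivity
      linarith
  have hsv : ∀ i : Fin n, ∀ y ∈ K, ∑ j, av i j * y j ≤ l := by
    intro i y hy
    refine convexHull_min ?_ (convex_halfSpace_le (lin_sum (av i)) l) hy
    rintro g (⟨k, rfl⟩ | rfl)
    · show ∑ j, av i j * (Pi.single k 1 : Fin n → ℝ) j ≤ (l:ℝ)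
      rw [hsingle]
      simp only [hav]
      by_cases hk : k = i <;> simp [hk] <;> nlinarith
    · show ∑ j, av i j * (-(l:ℝ)) ≤ (l:ℝ)
      rw [← Finset.sum_mul]
      have hsum : ∑ j, av i j = (n:ℝ) * l - D := by
        simp [hav, Finset.sum_sub_distrib, Finset.sum_ite_eq', Finset.card_univ, mul_comm]
      have heq : ((n:ℝ) * l - (1 + (n:ℝ) * l)) * (-(l:ℝ)) = l := by ring
      rw [hsum, hD, heq]
  -- interior points satisfy strict inequalities
  have hstrict0 : ∀ x ∈ interior K, ∑ i, x i < 1 := by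
    intro x hx
    have hv : (0:ℝ) < ∑ i, a0 i * (Pi.single (⟨0, hn⟩ : Fin n) 1 : Fin n → ℝ) i := by
      rw [hsingle]; norm_num [ha0]
    have := strict_of_interior a0 1 K hs0 _ hv hx
    simpa [ha0] using this
  have hstrictv : ∀ x ∈ interior K, ∀ i,
      (l:ℝ) * ∑ j, x j - D * x i < l := by
    intro x hx i
    have hv : (0:ℝ) < ∑ j, av i j * (-(Pi.single i (1:ℝ) : Fin n → ℝ)) j := by
      have : ∑ j, av i j * (-(Pi.single i (1:ℝ) : Fin n → ℝ)) j
          = -(av i i) := by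
        simp only [Pi.neg_apply, mul_neg, Finset.sum_neg_distrib]
        rw [hsingle]
      rw [this]
      have hii : av i i = (l:ℝ) - D := by simp [hav]
      rw [hii, hD]
      have : (0:ℝ) ≤ (l:ℝ) := by positivity
      nlinarith
    have := strict_of_interior (av i) l K (hsv i) _ hv hx
    have h2 : ∑ j, (D * if j = i then (1:ℝ) else 0) * x j = D * x i := by
      rw [Finset.sum_eq_single i]
      · simp
      · intro b _ hb; simp [hb]
      · intro h; simp at h
    have heq : ∑ j, av i j * x j = (l:ℝ) * ∑ j, x j - D * x i := by
      simp only [hav, sub_mul]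
      rw [Finset.sum_sub_distrib, ← Finset.mul_sum, h2]
    rw [heq] at this
    exact this
  -- the strict open set is inside K
  have hweak : ∀ y : Fin n → ℝ, (∑ i, y i < 1) →
      (∀ i, (l:ℝ) * ∑ j, y j - D * y i < l) → y ∈ K := by
    intro y hy1 hy2
    apply mem_hull_of_weak y hy1.le
    intro i
    have := hy2 i
    rw [hD] at *
    nlinarith [hy2 i]
  have hUopen : IsOpen {y : Fin n → ℝ |
      (∑ i, y i < 1) ∧ ∀ i, (l:ℝ) * ∑ j, y j - D * y i < l} := by
    have hcsum : Continuous fun y : Fin n → ℝ => ∑ i, y i :=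
      continuous_finset_sum _ fun i _ => continuous_apply i
    have h1 : IsOpen {y : Fin n → ℝ | ∑ i, y i < 1} :=
      isOpen_lt hcsum continuous_const
    have h2 : ∀ i, IsOpen {y : Fin n → ℝ | (l:ℝ) * ∑ j, y j - D * y i < l} :=
      fun i => isOpen_lt (by fun_prop) continuous_const
    have : {y : Fin n → ℝ | (∑ i, y i < 1) ∧ ∀ i, (l:ℝ) * ∑ j, y j - D * y i < l}
        = {y : Fin n → ℝ | ∑ i, y i < 1} ∩
          ⋂ i, {y : Fin n → ℝ | (l:ℝ) * ∑ j, y j - D * y i < l} := by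
      ext y; simp [Set.mem_iInter]
    rw [this]
    exact h1.inter (isOpen_iInter_of_finite h2)
  -- main set equality
  have hmain : {x : Fin n → ℝ |
      x ∈ interior K ∧ ∀ i, ∃ z : ℤ, x i = z} =
      {x : Fin n → ℝ | ∃ j : ℕ, j < l ∧ x = fun _ => -(j : ℝ)} := by
    ext x
    simp only [Set.mem_setOf_eq]
    constructor
    · rintro ⟨hx, hz⟩
      choose z hzx using hz
      have hSc : ∑ i, x i = ((∑ i, z i : ℤ) : ℝ) := by
        push_cast
        exact Finset.sum_congr rfl fun i _ => hzx i
      have h0 : (∑ i, z i : ℤ) < 1 := by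
        have := hstrict0 x hx
        rw [hSc] at this
        exact_mod_cast this
      have hi : ∀ i, (l : ℤ) * ∑ j, z j - (1 + n * l) * z i < l := by
        intro i
        have := hstrictv x hx i
        rw [hSc, hzx i, hD] at this
        exact_mod_cast this
      obtain ⟨j, hjl, hall⟩ := int_classify hn z h0 hi
      refine ⟨j, hjl, ?_⟩
      funext i
      rw [hzx i, hall i]
      push_cast
      ring
    · rintro ⟨j, hjl, rfl⟩
      constructor
      · apply interior_maximal _ hUopen
        · refine ⟨?_, ?_⟩
          · simp only [Set.mem_setOf_eq, Finset.sum_const, Finset.card_univ,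
              Fintype.card_fin, nsmul_eq_mul]
            nlinarith [Nat.cast_nonneg (α := ℝ) n, Nat.cast_nonneg (α := ℝ) j]
          · intro i
            simp only [Set.mem_setOf_eq, Finset.sum_const, Finset.card_univ,
              Fintype.card_fin, nsmul_eq_mul]
            rw [hD]
            have hjr : (j:ℝ) < l := by exact_mod_cast hjl
            nlinarith [Nat.cast_nonneg (α := ℝ) n, Nat.cast_nonneg (α := ℝ) j]
        · intro y hy
          exact hweak y hy.1 hy.2
      · intro i
        exact ⟨-(j:ℤ), by push_cast; ring⟩
  refine ⟨hmain, ?_⟩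
  rw [hmain]
  have himg : {x : Fin n → ℝ | ∃ j : ℕ, j < l ∧ x = fun _ => -(j : ℝ)}
      = (fun j : ℕ => (fun _ : Fin n => -(j : ℝ))) '' (Set.Iio l) := by
    ext x
    simp only [Set.mem_setOf_eq, Set.mem_image, Set.mem_Iio]
    constructor
    · rintro ⟨j, hj, rfl⟩; exact ⟨j, hj, rfl⟩
    · rintro ⟨j, hj, rfl⟩; exact ⟨j, hj, rfl⟩
  rw [himg]
  rw [Set.ncard_image_of_injective _ ?_, ← Finset.coe_Iio, Set.ncard_coe_finset,
    Nat.card_Iio]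
  intro j1 j2 h
  have := congrFun h ⟨0, hn⟩
  have : (j1:ℝ) = j2 := by linarith [neg_injective this]
  exact_mod_cast this
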